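/- Rotation equivariance of consistent load currents. Fix ω0 ∈ ℝ with ω0 ≠ 0 and let i_l : ℝ² → ℝ² be continuously differentiable. Suppose that for every w0 ∈ ℝ² the curve t ↦ i_l(R(ω0 t)·w0) satisfies d/dt i_l(R(ω0 t)·w0) = ω0·j·i_l(R(ω0 t)·w0) for all t ∈ ℝ. Then i_l is rotation equivariant: i_l(R(φ)·w) = R(φ)·i_l(w) for all φ ∈ ℝ and w ∈ ℝ². -/

import Mathlib

noncomputable section
open Matrix

/-- Vectors in ℝ². -/
abbrev V2 : Type := Fin 2 → ℝ
/-- 2×2 real matrices. -/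
abbrev M2 : Type := Matrix (Fin 2) (Fin 2) ℝ

/-- The 90° rotation matrix `j`. -/
def j2 : M2 := !![0, -1; 1, 0]

/-- The rotation matrix `R(θ)`. -/
def Rot (θ : ℝ) : M2 := !![Real.cos θ, -Real.sin θ; Real.sin θ, Real.cos θ]

/-- The unit vector `r(θ) = (cos θ, sin θ)`. -/
def rvec (θ : ℝ) : V2 := ![Real.cos θ, Real.sin θ]

/-- The Euclidean norm on ℝ². -/
def enorm2 (w : V2) : ℝ := Real.sqrt (w 0 ^ 2 + w 1 ^ 2)

/-- Rotation equivariance of consistent load currents: if a C¹ map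
i_l : ℝ² → ℝ² satisfies d/dt i_l(R(ω₀t)w₀) = ω₀ j i_l(R(ω₀t)w₀) along every
synchronous trajectory (ω₀ ≠ 0), then i_l(R(φ)w) = R(φ) i_l(w) for all φ, w. -/
theorem consistent_load_equivariant (ω0 : ℝ) (hω0 : ω0 ≠ 0) (il : V2 → V2)
    (hil : ContDiff ℝ 1 il)
    (hcurve : ∀ (w0 : V2) (t : ℝ),
      HasDerivAt (fun s => il (Rot (ω0 * s) *ᵥ w0))
        (ω0 • (j2 *ᵥ il (Rot (ω0 * t) *ᵥ w0))) t) :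
    ∀ (φ : ℝ) (w : V2), il (Rot φ *ᵥ w) = Rot φ *ᵥ il w := by
  have key : ∀ (w : V2) (t : ℝ), il (Rot (ω0 * t) *ᵥ w) = Rot (ω0 * t) *ᵥ il w := by
    intro w t
    set g : ℝ → V2 := fun s => il (Rot (ω0 * s) *ᵥ w) with hgdef
    -- componentwise derivatives of g
    have hg0 : ∀ s : ℝ, HasDerivAt (fun u => g u 0) (ω0 * (-(g s 1))) s := by
      intro s
      have h := hasDerivAt_pi.mp (hcurve w s) 0
      refine h.congr_deriv ?_
      simp [j2, Matrix.mulVec, dotProduct, Fin.sum_univ_two, hgdef]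
    have hg1 : ∀ s : ℝ, HasDerivAt (fun u => g u 1) (ω0 * g s 0) s := by
      intro s
      have h := hasDerivAt_pi.mp (hcurve w s) 1
      refine h.congr_deriv ?_
      simp [j2, Matrix.mulVec, dotProduct, Fin.sum_univ_two, hgdef]
    -- derivatives of cos/sin of ω0*s
    have hlin : ∀ s : ℝ, HasDerivAt (fun u : ℝ => ω0 * u) ω0 s := by
      intro s
      simpa using (hasDerivAt_id s).const_mul ω0
    have hc : ∀ s : ℝ, HasDerivAt (fun u : ℝ => Real.cos (ω0 * u))
        (-Real.sin (ω0 * s) * ω0) s := fun s => (hlin s).cos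
    have hs : ∀ s : ℝ, HasDerivAt (fun u : ℝ => Real.sin (ω0 * u))
        (Real.cos (ω0 * s) * ω0) s := fun s => (hlin s).sin
    -- the two conserved quantities
    set h0 : ℝ → ℝ := fun s => Real.cos (ω0 * s) * g s 0 + Real.sin (ω0 * s) * g s 1
      with hh0
    set h1 : ℝ → ℝ := fun s => -(Real.sin (ω0 * s)) * g s 0 + Real.cos (ω0 * s) * g s 1
      with hh1
    have dh0 : ∀ s : ℝ, HasDerivAt h0 0 s := by
      intro s
      have := ((hc s).mul (hg0 s)).add ((hs s).mul (hg1 s))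
      refine this.congr_deriv ?_
      ring
    have dh1 : ∀ s : ℝ, HasDerivAt h1 0 s := by
      intro s
      have := (((hs s).neg).mul (hg0 s)).add ((hc s).mul (hg1 s))
      refine this.congr_deriv ?_
      simp only [Pi.neg_apply]
      ring
    have hconst0 : h0 t = h0 0 :=
      is_const_of_deriv_eq_zero (fun s => (dh0 s).differentiableAt)
        (fun s => (dh0 s).deriv) t 0
    have hconst1 : h1 t = h1 0 :=
      is_const_of_deriv_eq_zero (fun s => (dh1 s).differentiableAt)
        (fun s => (dh1 s).deriv) t 0
    have hrot0 : Rot (ω0 * 0) *ᵥ w = w := by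
      funext i
      fin_cases i <;>
        simp [Rot, Matrix.mulVec, dotProduct, Fin.sum_univ_two]
    have hg0val : g 0 = il w := by
      simp only [hgdef, hrot0]
    have e0 : h0 t = il w 0 := by
      rw [hconst0, hh0]
      simp [hg0val]
    have e1 : h1 t = il w 1 := by
      rw [hconst1, hh1]
      simp [hg0val]
    -- recover g t from h0, h1
    funext i
    have trig := Real.sin_sq_add_cos_sq (ω0 * t)
    fin_cases i
    · show g t 0 = (Rot (ω0 * t) *ᵥ il w) 0
      simp [Rot, Matrix.mulVec, dotProduct, Fin.sum_univ_two]
      rw [← e0, ← e1]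
      simp only [hh0, hh1]
      linear_combination (-(g t 0)) * trig
    · show g t 1 = (Rot (ω0 * t) *ᵥ il w) 1
      simp [Rot, Matrix.mulVec, dotProduct, Fin.sum_univ_two]
      rw [← e0, ← e1]
      simp only [hh0, hh1]
      linear_combination (-(g t 1)) * trig
  intro φ w
  have := key w (φ / ω0)
  rwa [mul_div_cancel₀ φ hω0] at this
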